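/- Let O be a discrete valuation ring with uniformizer ϖ and fraction field K, let N ≥ 1, and let ℓ₀, …, ℓ_j ∈ O^N. Let k ≥ 0 be an integer. Then the K-linear span of ℓ₀, …, ℓ_j inside K^N has dimension at most k if and only if, for every n ≥ 1, the (O/ϖⁿO)-submodule of (O/ϖⁿO)^N generated by the reductions of ℓ₀, …, ℓ_j modulo ϖⁿ can be generated by at most k elements. -/

import Mathlib

open Matrix in
lemma aux_minor {F : Type*} [Field F] {m N : ℕ} {w : Fin m → Fin N → F}
    (hw : LinearIndependent F w) :
    ∃ e : Fin m → Fin N, (Matrix.of fun i t => w i (e t)).det ≠ 0 := by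
  classical
  set A : Matrix (Fin m) (Fin N) F := Matrix.of w with hA
  have hrank : A.rank = m := by
    have := hw.rank_matrix; rw [Fintype.card_fin] at this; exact this
  have hcols : Module.finrank F (Submodule.span F (Set.range Aᵀ)) = m := by
    exact (Matrix.rank_eq_finrank_span_cols A).symm.trans hrank
  have hspan : Submodule.span F (Set.range Aᵀ) = ⊤ := by
    apply Submodule.eq_top_of_finrank_eq
    rw [hcols, Module.finrank_pi, Fintype.card_fin]
  obtain ⟨b, hbsub, hbspan, hbli⟩ := exists_linearIndependent F (Set.range Aᵀ)
  rw [hspan] at hbspan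
  have hbasis : Module.Basis b F (Fin m → F) := Module.Basis.mk hbli (by rw [Subtype.range_coe, hbspan])
  haveI : Fintype b := FiniteDimensional.fintypeBasisIndex hbasis
  have hequiv : b ≃ Fin m := hbasis.indexEquiv (Pi.basisFun F (Fin m))
  have hchoice : ∀ t : Fin m, ∃ s : Fin N, Aᵀ s = (hequiv.symm t : Fin m → F) :=
    fun t => hbsub (hequiv.symm t).2
  choose e he using hchoice
  refine ⟨e, ?_⟩
  have hcolsind : LinearIndependent F (fun t : Fin m => Aᵀ (e t)) := by
    rw [show (fun t : Fin m => Aᵀ (e t)) = (fun x : b => (x : Fin m → F)) ∘ hequiv.symm from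
      funext fun t => he t]
    exact hbli.comp _ hequiv.symm.injective
  have hthis : LinearIndependent F (fun t => (Matrix.of fun i t' => w i (e t'))ᵀ t) := hcolsind
  have hunit := Matrix.linearIndependent_cols_iff_isUnit.mp hthis
  exact ((Matrix.isUnit_iff_isUnit_det _).mp hunit).ne_zero

/-- Componentwise reduction as a semilinear map. -/
def piSemilinear {O R : Type*} [CommRing O] [CommRing R] (σ : O →+* R) (N : ℕ) :
    (Fin N → O) →ₛₗ[σ] (Fin N → R) where
  toFun x := fun s => σ (x s)
  map_add' x y := by funext s; simp
  map_smul' c x := by funext s; simp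

/-- Let `O` be a discrete valuation ring with uniformizer `ϖ` and fraction field `K`, and let
`ℓ₀, …, ℓⱼ ∈ O^N`. The `K`-linear span of `ℓ₀, …, ℓⱼ` in `K^N` has dimension at most `k` if
and only if, for every `n ≥ 1`, the `(O/ϖⁿ)`-submodule of `(O/ϖⁿ)^N` generated by the
reductions of `ℓ₀, …, ℓⱼ` modulo `ϖⁿ` can be generated by at most `k` elements. -/
theorem span_rank_le_iff_reductions_generated
    (O : Type*) [CommRing O] [IsDomain O] [IsDiscreteValuationRing O]
    (ϖ : O) (hϖ : Irreducible ϖ)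
    (N : ℕ) (hN : 1 ≤ N) (j : ℕ) (ℓ : Fin (j + 1) → Fin N → O) (k : ℕ) :
    Module.finrank (FractionRing O)
        ↥(Submodule.span (FractionRing O)
          (Set.range fun t : Fin (j + 1) =>
            fun s : Fin N => algebraMap O (FractionRing O) (ℓ t s))) ≤ k ↔
      ∀ n : ℕ, 1 ≤ n →
        ∃ v : Fin k → (Fin N → O ⧸ Ideal.span {ϖ ^ n}),
          Submodule.span (O ⧸ Ideal.span {ϖ ^ n}) (Set.range v) =
            Submodule.span (O ⧸ Ideal.span {ϖ ^ n})
              (Set.range fun t : Fin (j + 1) =>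
                fun s : Fin N => Ideal.Quotient.mk (Ideal.span {ϖ ^ n}) (ℓ t s)) := by
  classical
  set K := FractionRing O
  set ℓK : Fin (j + 1) → Fin N → K := fun t s => algebraMap O K (ℓ t s) with hℓK
  set W : Submodule K (Fin N → K) :=
    Submodule.span K (Set.range fun t => fun s => algebraMap O K (ℓ t s)) with hW
  -- the O-linear "inclusion" of O^N into K^N
  let g : (Fin N → O) →ₗ[O] (Fin N → K) :=
    { toFun := fun x s => algebraMap O K (x s)
      map_add' := fun x y => by funext s; simp
      map_smul' := fun c x => by funext s; simp [Algebra.smul_def] }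
  have hginj : Function.Injective g := by
    intro x y hxy
    funext s
    exact IsFractionRing.injective O K (congrFun hxy s)
  have hgrange : ∀ t, g (ℓ t) = ℓK t := fun t => rfl
  constructor
  · -- forward direction
    intro hk n hn
    set P : Submodule O (Fin N → O) := Submodule.span O (Set.range ℓ) with hP
    obtain ⟨r, b⟩ := Submodule.basisOfPid (Pi.basisFun O (Fin N)) P
    -- images of the basis lie in W
    have hmem : ∀ x ∈ P, g x ∈ W := by
      intro x hx
      have h1 : Submodule.map g P ≤ Submodule.restrictScalars O W := by
        rw [hP, Submodule.map_span, ← Set.range_comp]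
        have : Submodule.span O (Set.range (⇑g ∘ ℓ)) ≤
            Submodule.restrictScalars O (Submodule.span K (Set.range (⇑g ∘ ℓ))) :=
          Submodule.span_le_restrictScalars O K _
        exact this.trans (by rw [hW]; rfl)
      exact h1 (Submodule.mem_map_of_mem hx)
    -- r ≤ k
    have hrk : r ≤ k := by
      let u : Fin r → (Fin N → K) := fun i => g (b i)
      have hliO : LinearIndependent O u := by
        have := b.linearIndependent.map' (g.comp P.subtype)
          (LinearMap.ker_eq_bot.mpr (hginj.comp Subtype.val_injective))
        exact this
      have hliK : LinearIndependent K u :=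
        hliO.localization (S := nonZeroDivisors O) (Rₛ := K)
      have hcard : Module.finrank K (Submodule.span K (Set.range u)) = r := by
        rw [finrank_span_eq_card hliK, Fintype.card_fin]
      have hle : Submodule.span K (Set.range u) ≤ W := by
        rw [Submodule.span_le]
        rintro _ ⟨i, rfl⟩
        exact hmem _ (b i).2
      calc r = Module.finrank K (Submodule.span K (Set.range u)) := hcard.symm
        _ ≤ Module.finrank K W := Submodule.finrank_mono hle
        _ ≤ k := hk
    -- generators of P
    let v' : Fin k → (Fin N → O) := fun i =>
      if h : (i : ℕ) < r then ((b ⟨(i : ℕ), h⟩ : P) : Fin N → O) else 0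
    have hspanv' : Submodule.span O (Set.range v') = P := by
      apply le_antisymm
      · rw [Submodule.span_le]
        rintro _ ⟨i, rfl⟩
        by_cases h : (i : ℕ) < r
        · simpa [v', h] using (b ⟨(i : ℕ), h⟩).2
        · simp [v', h, P.zero_mem]
      · intro x hx
        have hxb : (⟨x, hx⟩ : P) ∈ Submodule.span O (Set.range b) := by
          rw [b.span_eq]; trivial
        have h2 := Submodule.mem_map_of_mem (f := P.subtype) hxb
        rw [Submodule.map_span, ← Set.range_comp] at h2
        refine Submodule.span_le.mpr ?_ h2
        rintro _ ⟨i, rfl⟩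
        apply Submodule.subset_span
        refine ⟨⟨(i : ℕ), lt_of_lt_of_le i.isLt hrk⟩, ?_⟩
        simp [v', i.isLt]
    -- reduce mod ϖ^n
    set I : Ideal O := Ideal.span {ϖ ^ n} with hI
    haveI : RingHomSurjective (Ideal.Quotient.mk I) := ⟨Ideal.Quotient.mk_surjective⟩
    let f := piSemilinear (Ideal.Quotient.mk I) N
    refine ⟨fun i => f (v' i), ?_⟩
    have e1 : Submodule.span (O ⧸ I) (Set.range fun i => f (v' i)) = Submodule.map f P := by
      rw [← hspanv', Submodule.map_span, ← Set.range_comp]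
      rfl
    have e2 : Submodule.map f P =
        Submodule.span (O ⧸ I) (Set.range fun t : Fin (j + 1) =>
          fun s : Fin N => Ideal.Quotient.mk I (ℓ t s)) := by
      rw [hP, Submodule.map_span, ← Set.range_comp]
      rfl
    rw [e1, e2]
  · -- backward direction
    intro h
    by_contra hk
    push_neg at hk
    obtain ⟨b, hbsub, hbspan, hbli⟩ := exists_linearIndependent K
      (Set.range fun t => fun s : Fin N => algebraMap O K (ℓ t s))
    have hbfin : b.Finite := hbli.setFinite
    haveI : Fintype b := hbfin.fintype
    have hcard : Module.finrank K W = b.toFinset.card := by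
      rw [hW, ← hbspan, finrank_span_set_eq_card hbli]
    have hkW : k < Module.finrank K ↥W := hk
    have hcard' : k + 1 ≤ Fintype.card b := by
      rw [Set.toFinset_card] at hcard
      omega
    obtain ⟨emb⟩ : Nonempty (Fin (k + 1) ↪ b) :=
      Function.Embedding.nonempty_of_card_le (by simpa using hcard')
    set w : Fin (k + 1) → (Fin N → K) := fun i => ((emb i : b) : Fin N → K) with hw
    have hwli : LinearIndependent K w := hbli.comp emb emb.injective
    have hchoice : ∀ i, ∃ t : Fin (j + 1), (fun s => algebraMap O K (ℓ t s)) = w i :=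
      fun i => hbsub (emb i).2
    choose c hc using hchoice
    obtain ⟨e, hdet⟩ := aux_minor hwli
    set B : Matrix (Fin (k + 1)) (Fin (k + 1)) O := Matrix.of fun i t => ℓ (c i) (e t) with hB
    have hdetB : B.det ≠ 0 := by
      intro h0
      apply hdet
      have : (algebraMap O K) B.det = (Matrix.of fun i t => w i (e t)).det := by
        rw [RingHom.map_det]
        congr 1
        ext i t
        rw [RingHom.mapMatrix_apply]
        show algebraMap O K (ℓ (c i) (e t)) = w i (e t)
        rw [← hc i]
      rw [← this, h0, map_zero]
    -- B.det is in every power of the maximal ideal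
    have hall : ∀ n : ℕ, 1 ≤ n → B.det ∈ Ideal.span {ϖ ^ n} := by
      intro n hn
      obtain ⟨v, hv⟩ := h n hn
      let I : Ideal O := Ideal.span {ϖ ^ n}
      let σ : O →+* O ⧸ Ideal.span {ϖ ^ n} := Ideal.Quotient.mk (Ideal.span {ϖ ^ n})
      have hmemv : ∀ i : Fin (k + 1),
          (fun s => σ (ℓ (c i) s)) ∈
            Submodule.span (O ⧸ Ideal.span {ϖ ^ n}) (Set.range v) := by
        intro i
        rw [hv]
        exact Submodule.subset_span ⟨c i, rfl⟩
      have hex : ∀ i : Fin (k + 1), ∃ C : Fin k → O ⧸ Ideal.span {ϖ ^ n},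
          ∑ m, C m • v m = fun s => σ (ℓ (c i) s) := by
        intro i
        exact (Submodule.mem_span_range_iff_exists_fun _).mp (hmemv i)
      choose C hC using hex
      let C' : Matrix (Fin (k + 1)) (Fin (k + 1)) (O ⧸ Ideal.span {ϖ ^ n}) := Matrix.of fun i t =>
        if ht : (t : ℕ) < k then C i ⟨(t : ℕ), ht⟩ else 0
      let V' : Matrix (Fin (k + 1)) (Fin (k + 1)) (O ⧸ Ideal.span {ϖ ^ n}) := Matrix.of fun t s =>
        if ht : (t : ℕ) < k then v ⟨(t : ℕ), ht⟩ (e s) else 0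
      have hfact : σ.mapMatrix B = C' * V' := by
        ext i s
        rw [RingHom.mapMatrix_apply, Matrix.map_apply, Matrix.mul_apply]
        have hL : σ (B i s) = ∑ m : Fin k, C i m * v m (e s) := by
          have := congrFun (hC i) (e s)
          simp only [Finset.sum_apply, Pi.smul_apply, smul_eq_mul] at this
          rw [hB]
          exact this.symm
        rw [hL, Fin.sum_univ_castSucc]
        have hlast : C' i (Fin.last k) * V' (Fin.last k) s = 0 := by
          simp [C', Fin.last]
        rw [hlast, add_zero]
        refine Finset.sum_congr rfl fun m _ => ?_
        have hm : ((Fin.castSucc m : Fin (k + 1)) : ℕ) < k := by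
          simpa using m.isLt
        simp only [C', V', Matrix.of_apply, dif_pos hm]
        congr 1 <;> · congr 1; exact Fin.ext (by simp)
      have hdet0 : σ B.det = 0 := by
        rw [RingHom.map_det, hfact, Matrix.det_mul]
        have : C'.det = 0 := by
          apply Matrix.det_eq_zero_of_column_eq_zero (Fin.last k)
          intro i
          simp [C', Fin.last]
        rw [this, zero_mul]
      exact (Ideal.Quotient.eq_zero_iff_mem).mp hdet0
    have hbot : B.det ∈ (⨅ n : ℕ, (Ideal.span {ϖ}) ^ n : Ideal O) := by
      rw [Submodule.mem_iInf]
      intro n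
      rcases Nat.eq_zero_or_pos n with hn | hn
      · subst hn; simp
      · rw [Ideal.span_singleton_pow]
        exact hall n hn
    rw [Ideal.iInf_pow_eq_bot_of_isDomain _ (by
      rw [Ne, Ideal.span_singleton_eq_top]
      exact hϖ.not_isUnit)] at hbot
    exact hdetB hbot
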